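/- For all f < 0, (1 − 2f)^{1/2}(2f² − 5f + 2) > 2(1 − f) > 0; in particular the map f ↦ 2(1 − f)/((1 − 2f)^{1/2}(2f² − 5f + 2)) takes values in (0, 1) on (−∞, 0) and tends to 0 as f → −∞. -/
import Mathlib


open Real Filter

theorem stmt_19 :
    (∀ f : ℝ, f < 0 →
      Real.sqrt (1 - 2 * f) * (2 * f ^ 2 - 5 * f + 2) > 2 * (1 - f) ∧ 2 * (1 - f) > 0 ∧
      2 * (1 - f) / (Real.sqrt (1 - 2 * f) * (2 * f ^ 2 - 5 * f + 2)) ∈ Set.Ioo (0 : ℝ) 1) ∧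
    Tendsto (fun f : ℝ => 2 * (1 - f) / (Real.sqrt (1 - 2 * f) * (2 * f ^ 2 - 5 * f + 2)))
      atBot (nhds 0) := by
  have key : ∀ f : ℝ, f < 0 →
      Real.sqrt (1 - 2 * f) * (2 * f ^ 2 - 5 * f + 2) > 2 * (1 - f) ∧ 2 * (1 - f) > 0 ∧
      2 * (1 - f) / (Real.sqrt (1 - 2 * f) * (2 * f ^ 2 - 5 * f + 2)) ∈ Set.Ioo (0 : ℝ) 1 := by
    intro f hf
    have hq : 2 * (1 - f) < 2 * f ^ 2 - 5 * f + 2 := by nlinarith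
    have hs : 1 ≤ Real.sqrt (1 - 2 * f) := by
      nlinarith [Real.sq_sqrt (show (0:ℝ) ≤ 1 - 2 * f by linarith),
        Real.sqrt_nonneg (1 - 2 * f)]
    have hnum : 0 < 2 * (1 - f) := by linarith
    have hqpos : 0 < 2 * f ^ 2 - 5 * f + 2 := by linarith
    have h1 : Real.sqrt (1 - 2 * f) * (2 * f ^ 2 - 5 * f + 2) > 2 * (1 - f) := by
      nlinarith
    have hdpos : 0 < Real.sqrt (1 - 2 * f) * (2 * f ^ 2 - 5 * f + 2) := lt_trans hnum h1
    exact ⟨h1, hnum, div_pos hnum hdpos, (div_lt_one hdpos).mpr h1⟩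
  refine ⟨key, ?_⟩
  have hbound : ∀ᶠ f : ℝ in atBot,
      2 * (1 - f) / (Real.sqrt (1 - 2 * f) * (2 * f ^ 2 - 5 * f + 2)) ≤ (-f)⁻¹ := by
    filter_upwards [eventually_lt_atBot (0:ℝ)] with f hf
    have hs : 1 ≤ Real.sqrt (1 - 2 * f) := by
      nlinarith [Real.sq_sqrt (show (0:ℝ) ≤ 1 - 2 * f by linarith),
        Real.sqrt_nonneg (1 - 2 * f)]
    have hqpos : 0 < 2 * f ^ 2 - 5 * f + 2 := by nlinarith
    have hdpos : 0 < Real.sqrt (1 - 2 * f) * (2 * f ^ 2 - 5 * f + 2) := by nlinarith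
    have hfpos : 0 < -f := by linarith
    rw [inv_eq_one_div, div_le_div_iff₀ hdpos hfpos]
    nlinarith
  have hlow : ∀ᶠ f : ℝ in atBot,
      (0:ℝ) ≤ 2 * (1 - f) / (Real.sqrt (1 - 2 * f) * (2 * f ^ 2 - 5 * f + 2)) := by
    filter_upwards [eventually_lt_atBot (0:ℝ)] with f hf
    exact le_of_lt ((key f hf).2.2).1
  have htend : Tendsto (fun f : ℝ => (-f)⁻¹) atBot (nhds 0) :=
    tendsto_inv_atTop_zero.comp tendsto_neg_atBot_atTop
  exact tendsto_of_tendsto_of_tendsto_of_le_of_le' tendsto_const_nhds htend hlow hbound
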